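/- For any c > 0, setting a = (1-√c)² and b = (1+√c)², we have ∫_a^b xⁿ · √((b-x)(x-a))/(2πx) dx = ∑_{π ∈ NC(n)} c^{#(π)} for every n ≥ 1, where #(π) is the number of blocks of π (with an additional atom of mass 1-c at 0 when c < 1 contributing nothing to positive moments). -/

import Mathlib

open Finset

/-- `P` is a partition of `Fin n` into nonempty blocks. -/
def IsPartition {n : ℕ} (P : Finset (Finset (Fin n))) : Prop :=
  (∀ B ∈ P, B.Nonempty) ∧ ∀ x : Fin n, ∃! B, B ∈ P ∧ x ∈ B

/-- `P` is non-crossing. -/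
def IsNonCrossing {n : ℕ} (P : Finset (Finset (Fin n))) : Prop :=
  ∀ B₁ ∈ P, ∀ B₂ ∈ P, ∀ a ∈ B₁, ∀ b ∈ B₂, ∀ c ∈ B₁, ∀ d ∈ B₂,
    a < b → b < c → c < d → B₁ = B₂

open Classical in
/-- The set of non-crossing partitions of `[n]`, as a `Finset`. -/
noncomputable def NC (n : ℕ) : Finset (Finset (Finset (Fin n))) :=
  Finset.univ.filter fun P => IsPartition P ∧ IsNonCrossing P

namespace MPaux


/-- Lower-index Vandermonde: `∑_{i≤N} C(i,p) C(N-i,q) = C(N+1, p+q+1)`. -/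
lemma choose_mul_choose_sum (q : ℕ) : ∀ (N p : ℕ),
    ∑ i ∈ range (N+1), Nat.choose i p * Nat.choose (N-i) q
      = Nat.choose (N+1) (p+q+1) := by
  intro N
  induction N with
  | zero =>
    intro p
    rw [Finset.sum_range_one]
    rcases Nat.eq_zero_or_pos (p+q) with h | h
    · have hp : p = 0 := by omega
      have hq : q = 0 := by omega
      subst hp; subst hq; simp
    · rw [Nat.choose_eq_zero_of_lt (show 1 < p+q+1 by omega)]
      rcases Nat.eq_zero_or_pos p with hp | hp
      · have hq : 0 < q := by omega
        rw [Nat.choose_eq_zero_of_lt (show (0:ℕ) < q by omega)]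
        simp
      · rw [Nat.choose_eq_zero_of_lt hp]
        simp
  | succ N ih =>
    intro p
    rw [Finset.sum_range_succ']
    rcases p with _ | p'
    · have h1 : ∀ i ∈ range (N+1), Nat.choose (i+1) 0 * Nat.choose (N+1-(i+1)) q
          = Nat.choose i 0 * Nat.choose (N-i) q := by
        intro i _; simp [Nat.succ_sub_succ]
      rw [Finset.sum_congr rfl h1, ih 0]
      have e : Nat.choose (N+1+1) (q+1) = Nat.choose (N+1) q + Nat.choose (N+1) (q+1) :=
        Nat.choose_succ_succ _ _
      simp only [Nat.choose_zero_right, one_mul, Nat.sub_zero, Nat.zero_add] at *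
      omega
    · have h1 : ∀ i ∈ range (N+1), Nat.choose (i+1) (p'+1) * Nat.choose (N+1-(i+1)) q
          = Nat.choose i p' * Nat.choose (N-i) q + Nat.choose i (p'+1) * Nat.choose (N-i) q := by
        intro i _
        rw [Nat.succ_sub_succ, Nat.choose_succ_succ, Nat.add_mul]
      rw [Finset.sum_congr rfl h1, Finset.sum_add_distrib, ih p', ih (p'+1)]
      have h0 : Nat.choose 0 (p'+1) = 0 := by simp
      rw [h0]
      have e1 : p' + 1 + q + 1 = (p' + q + 1) + 1 := by omega
      rw [e1]
      have e : Nat.choose (N+1+1) ((p'+q+1)+1)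
          = Nat.choose (N+1) (p'+q+1) + Nat.choose (N+1) ((p'+q+1)+1) :=
        Nat.choose_succ_succ _ _
      omega

/-- Triangle reindexing for a doubly-indexed sum vanishing past the diagonal. -/
lemma tri_sum (n : ℕ) (f : ℕ → ℕ → ℝ) (hf : ∀ m l, n ≤ m + l → f m l = 0) :
    ∑ m ∈ range n, ∑ l ∈ range n, f m l
      = ∑ s ∈ range n, ∑ j ∈ range (s+1), f j (s - j) := by
  rw [← Finset.sum_product']
  conv_rhs => rw [Finset.sum_sigma' (range n) (fun s => range (s+1)) (fun s j => f j (s-j))]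
  rw [show (range n ×ˢ range n) = ((range n ×ˢ range n).filter (fun p => p.1 + p.2 < n)) ∪
      ((range n ×ˢ range n).filter (fun p => ¬ p.1 + p.2 < n)) from
    (Finset.filter_union_filter_not_eq _ _).symm]
  rw [Finset.sum_union (Finset.disjoint_filter_filter_not _ _ _)]
  have hz : ∑ p ∈ (range n ×ˢ range n).filter (fun p => ¬ p.1 + p.2 < n), f p.1 p.2 = 0 := by
    apply Finset.sum_eq_zero
    intro p hp
    simp only [Finset.mem_filter] at hp
    exact hf _ _ (by omega)
  rw [hz, add_zero]
  refine Finset.sum_nbij' (fun p => (⟨p.1 + p.2, p.1⟩ : Σ _ : ℕ, ℕ))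
    (fun q => ((q.2, q.1 - q.2) : ℕ × ℕ)) ?_ ?_ ?_ ?_ ?_
  · intro x hx
    obtain ⟨u,v⟩ := x
    simp only [Finset.mem_filter, Finset.mem_product, Finset.mem_range] at hx
    simp only [Finset.mem_sigma, Finset.mem_range]
    omega
  · intro x hx
    obtain ⟨u,v⟩ := x
    simp only [Finset.mem_sigma, Finset.mem_range] at hx
    simp only [Finset.mem_filter, Finset.mem_product, Finset.mem_range]
    omega
  · intro x hx
    obtain ⟨u,v⟩ := x
    show ((u : ℕ), u + v - u) = (u, v)
    congr 1
    omega
  · intro x hx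
    obtain ⟨u,v⟩ := x
    simp only [Finset.mem_sigma, Finset.mem_range] at hx
    have h1 : v + (u - v) = u := by omega
    simp [h1]
  · intro x hx
    obtain ⟨u,v⟩ := x
    simp only
    congr 1
    omega

lemma sum_range_two_mul (n : ℕ) (f : ℕ → ℝ) :
    ∑ j ∈ range (2*n), f j = ∑ m ∈ range n, f (2*m) + ∑ m ∈ range n, f (2*m+1) := by
  induction n with
  | zero => simp
  | succ n ih =>
    have h : 2*(n+1) = (2*n+1)+1 := by omega
    rw [h, Finset.sum_range_succ, Finset.sum_range_succ,
      Finset.sum_range_succ (fun m => f (2*m)) n, Finset.sum_range_succ (fun m => f (2*m+1)) n,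
      ih]
    ring

lemma catalan_cast (s : ℕ) :
    ((catalan (s+1) : ℝ)) = ∑ j ∈ range (s+1), (catalan j : ℝ) * (catalan (s-j) : ℝ) := by
  have h : catalan (s+1) = ∑ j ∈ range (s+1), catalan j * catalan (s-j) := by
    rw [catalan_succ, Fin.sum_univ_eq_sum_range (fun j => catalan j * catalan (s-j)) (s+1)]
  rw [h]
  push_cast
  rfl

end MPaux

namespace MPaux

/-- Explicit MP moment polynomial. -/
noncomputable def A (c : ℝ) (n : ℕ) : ℝ :=
  c * ∑ m ∈ range n, ((n-1).choose (2*m) : ℝ) * (catalan m : ℝ) * c^m * (1+c)^((n:ℤ)-1-2*m)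

/-- Free-Poisson moment recursion. -/
noncomputable def pp (c : ℝ) : ℕ → ℝ
  | 0 => 1
  | n+1 => c * pp c n + ∑ i ∈ (range n).attach, pp c (i.1+1) * pp c (n-1-i.1)
  decreasing_by
  · omega
  · have := i.2; simp only [Finset.mem_range] at this; omega
  · omega

lemma pp_zero (c : ℝ) : pp c 0 = 1 := by rw [pp]

lemma pp_succ (c : ℝ) (n : ℕ) :
    pp c (n+1) = c * pp c n + ∑ i ∈ range n, pp c (i+1) * pp c (n-1-i) := by
  rw [pp, Finset.sum_attach (range n) (fun i => pp c (i+1) * pp c (n-1-i))]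

lemma A_one (c : ℝ) : A c 1 = c := by
  simp [A]

lemma A_succ_eq (c : ℝ) (n : ℕ) :
    A c (n+1) = c * ∑ m ∈ range (n+1),
      ((n).choose (2*m) : ℝ) * (catalan m : ℝ) * c^m * (1+c)^((n:ℤ)-2*m) := by
  simp only [A, Nat.add_sub_cancel]
  congr 1
  apply Finset.sum_congr rfl
  intro m _
  have h : ((n+1 : ℕ) : ℤ) - 1 - 2*m = (n : ℤ) - 2*m := by push_cast; ring
  rw [h]

lemma A_diff (c : ℝ) (hc : 0 < c) (K : ℕ) :
    A c (K+2) - (1+c) * A c (K+1)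
      = c * ∑ m ∈ range (K+1), ((K).choose (2*m+1) : ℝ) * (catalan (m+1) : ℝ)
          * c^(m+1) * (1+c)^((K:ℤ)-1-2*m) := by
  have hv : (0:ℝ) < 1 + c := by linarith
  set g : ℕ → ℝ := fun m => ((K+1).choose (2*m) : ℝ) * (catalan m : ℝ) * c^m
      * (1+c)^(((K+1:ℕ):ℤ)-2*m)
    - ((K).choose (2*m) : ℝ) * (catalan m : ℝ) * c^m * ((1+c) * (1+c)^((K:ℤ)-2*m)) with hg
  have step1 : A c (K+2) - (1+c) * A c (K+1) = c * ∑ m ∈ range (K+2), g m := by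
    rw [A_succ_eq c (K+1), A_succ_eq c K]
    have e1 : (1+c) * (c * ∑ m ∈ range (K+1),
          ((K).choose (2*m) : ℝ) * (catalan m : ℝ) * c^m * (1+c)^((K:ℤ)-2*m))
        = c * ∑ m ∈ range (K+2),
          ((K).choose (2*m) : ℝ) * (catalan m : ℝ) * c^m * ((1+c) * (1+c)^((K:ℤ)-2*m)) := by
      conv_rhs => rw [Finset.sum_range_succ]
      have hz : ((K).choose (2*(K+1)) : ℝ) = 0 := by
        rw [Nat.choose_eq_zero_of_lt (by omega)]; simp
      rw [hz]
      simp only [zero_mul, mul_zero, add_zero, Finset.mul_sum]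
      apply Finset.sum_congr rfl
      intro m _
      ring
    rw [e1, ← mul_sub, ← Finset.sum_sub_distrib]
  rw [step1]
  congr 1
  rw [Finset.sum_range_succ']
  have hg0 : g 0 = 0 := by
    simp only [hg, Nat.mul_zero, Nat.choose_zero_right, Nat.cast_one, catalan_zero, pow_zero,
      Nat.cast_zero, Nat.cast_ofNat, mul_zero, sub_zero, one_mul, mul_one]
    have h1 : ((K+1:ℕ):ℤ) = (K:ℤ) + 1 := by push_cast; ring
    rw [h1, zpow_add_one₀ hv.ne']
    ring
  rw [hg0, add_zero]
  apply Finset.sum_congr rfl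
  intro m _
  simp only [hg]
  have hch : ((K+1).choose (2*(m+1)) : ℝ)
      = ((K).choose (2*m+1) : ℝ) + ((K).choose (2*m+2) : ℝ) := by
    have h : (K+1).choose (2*m+1+1) = (K).choose (2*m+1) + (K).choose (2*m+1+1) :=
      Nat.choose_succ_succ K (2*m+1)
    have e : 2*(m+1) = 2*m+1+1 := by ring
    rw [e]
    exact_mod_cast h
  have hz1 : (1+c) * (1+c)^((K:ℤ) - 2*(m+1:ℕ)) = (1+c)^((K:ℤ)-1-2*m) := by
    rw [mul_comm, ← zpow_add_one₀ hv.ne']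
    congr 1
    push_cast; ring
  have hz2 : (((K+1:ℕ)):ℤ) - 2*(m+1:ℕ) = (K:ℤ)-1-2*m := by push_cast; ring
  rw [hz2, hch, hz1]
  have e2 : 2*(m+1) = 2*m+2 := by ring
  rw [e2]
  ring

lemma A_quad (c : ℝ) (hc : 0 < c) (K : ℕ) :
    ∑ i ∈ range K, A c (i+1) * A c (K-i)
      = c * ∑ m ∈ range (K+1), ((K).choose (2*m+1) : ℝ) * (catalan (m+1) : ℝ)
          * c^(m+1) * (1+c)^((K:ℤ)-1-2*m) := by
  have hv : (0:ℝ) < 1 + c := by linarith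
  cases K with
  | zero => simp
  | succ N =>
    set T : ℕ → ℕ → ℕ → ℝ := fun i m l =>
      (((Nat.choose i (2*m) * Nat.choose (N-i) (2*l) : ℕ)) : ℝ)
        * ((catalan m : ℝ) * (catalan l : ℝ) * c^(m+l)
            * (1+c)^((N:ℤ)-2*((m:ℤ)+(l:ℤ)))) with hT
    have main : ∀ i ∈ range (N+1), A c (i+1) * A c (N+1-i)
        = c^2 * ∑ m ∈ range (N+2), ∑ l ∈ range (N+2), T i m l := by
      intro i hi
      have hiN : i ≤ N := by have := Finset.mem_range.mp hi; omega
      have e0 : N+1-i = (N-i)+1 := by omega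
      rw [e0, A_succ_eq, A_succ_eq]
      have ext1 : ∑ m ∈ range (i+1),
            ((i.choose (2*m) : ℝ)) * (catalan m : ℝ) * c^m * (1+c)^((i:ℤ)-2*m)
          = ∑ m ∈ range (N+2),
            ((i.choose (2*m) : ℝ)) * (catalan m : ℝ) * c^m * (1+c)^((i:ℤ)-2*m) := by
        apply Finset.sum_subset (Finset.range_subset_range.mpr (by omega))
        intro m _ hm
        simp only [Finset.mem_range] at hm
        rw [Nat.choose_eq_zero_of_lt (by omega)]
        simp
      have ext2 : ∑ l ∈ range ((N-i)+1),
            (((N-i).choose (2*l) : ℝ)) * (catalan l : ℝ) * c^l * (1+c)^(((N-i:ℕ):ℤ)-2*l)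
          = ∑ l ∈ range (N+2),
            (((N-i).choose (2*l) : ℝ)) * (catalan l : ℝ) * c^l * (1+c)^(((N-i:ℕ):ℤ)-2*l) := by
        apply Finset.sum_subset (Finset.range_subset_range.mpr (by omega))
        intro l _ hl
        simp only [Finset.mem_range] at hl
        rw [Nat.choose_eq_zero_of_lt (by omega)]
        simp
      rw [ext1, ext2, mul_mul_mul_comm, Finset.sum_mul_sum]
      rw [show c * c = c^2 from by ring]
      congr 1
      apply Finset.sum_congr rfl
      intro m _
      apply Finset.sum_congr rfl
      intro l _
      simp only [hT]
      have hcast : ((N-i:ℕ):ℤ) = (N:ℤ) - (i:ℤ) := by rw [Nat.cast_sub hiN]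
      have hzp : (1+c)^((N:ℤ)-2*((m:ℤ)+(l:ℤ)))
          = (1+c)^((i:ℤ)-2*(m:ℤ)) * (1+c)^((N:ℤ)-(i:ℤ)-2*(l:ℤ)) := by
        rw [← zpow_add₀ hv.ne']
        congr 1
        ring
      rw [hcast, hzp]
      push_cast
      ring
    rw [Finset.sum_congr rfl main, ← Finset.mul_sum]
    have comm1 : ∑ i ∈ range (N+1), ∑ m ∈ range (N+2), ∑ l ∈ range (N+2), T i m l
        = ∑ m ∈ range (N+2), ∑ l ∈ range (N+2), ∑ i ∈ range (N+1), T i m l := by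
      rw [Finset.sum_comm]
      exact Finset.sum_congr rfl (fun m _ => Finset.sum_comm)
    rw [comm1]
    have vand : ∀ m ∈ range (N+2), ∑ l ∈ range (N+2), ∑ i ∈ range (N+1), T i m l
        = ∑ l ∈ range (N+2), (((N+1).choose (2*(m+l)+1) : ℝ))
            * ((catalan m : ℝ) * (catalan l : ℝ) * c^(m+l)
                * (1+c)^((N:ℤ)-2*((m:ℤ)+(l:ℤ)))) := by
      intro m _
      apply Finset.sum_congr rfl
      intro l _
      simp only [hT]
      rw [← Finset.sum_mul, ← Nat.cast_sum, choose_mul_choose_sum (2*l) N (2*m)]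
      have e : 2*m+2*l+1 = 2*(m+l)+1 := by ring
      rw [e]
    rw [Finset.sum_congr rfl vand]
    rw [tri_sum (N+2)
      (fun m l => (((N+1).choose (2*(m+l)+1) : ℝ))
        * ((catalan m : ℝ) * (catalan l : ℝ) * c^(m+l)
            * (1+c)^((N:ℤ)-2*((m:ℤ)+(l:ℤ)))))
      (by
        intro m l hml
        have hz : (((N+1).choose (2*(m+l)+1)) : ℝ) = 0 := by
          rw [Nat.choose_eq_zero_of_lt (by omega)]; simp
        simp [hz])]
    have final : ∀ s ∈ range (N+2),
        ∑ j ∈ range (s+1), (((N+1).choose (2*(j+(s-j))+1) : ℝ))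
          * ((catalan j : ℝ) * (catalan (s-j) : ℝ) * c^(j+(s-j))
              * (1+c)^((N:ℤ)-2*((j:ℤ)+((s-j:ℕ):ℤ))))
        = ((N+1).choose (2*s+1) : ℝ) * c^s * (1+c)^((N:ℤ)-2*(s:ℤ)) * (catalan (s+1) : ℝ) := by
      intro s _
      have inner : ∀ j ∈ range (s+1),
          (((N+1).choose (2*(j+(s-j))+1) : ℝ))
            * ((catalan j : ℝ) * (catalan (s-j) : ℝ) * c^(j+(s-j))
                * (1+c)^((N:ℤ)-2*((j:ℤ)+((s-j:ℕ):ℤ))))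
          = (((N+1).choose (2*s+1) : ℝ) * c^s * (1+c)^((N:ℤ)-2*(s:ℤ)))
              * ((catalan j : ℝ) * (catalan (s-j) : ℝ)) := by
        intro j hj
        have hjs : j ≤ s := by have := Finset.mem_range.mp hj; omega
        have e : j + (s-j) = s := by omega
        have e2 : (j:ℤ) + ((s-j:ℕ):ℤ) = (s:ℤ) := by
          rw [Nat.cast_sub hjs]; ring
        rw [e, e2]
        ring
      rw [Finset.sum_congr rfl inner, ← Finset.mul_sum, ← catalan_cast]
    rw [Finset.sum_congr rfl final, Finset.mul_sum, Finset.mul_sum]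
    apply Finset.sum_congr rfl
    intro s _
    have hexp : (((N+1:ℕ)):ℤ) - 1 - 2*(s:ℤ) = (N:ℤ) - 2*(s:ℤ) := by push_cast; ring
    rw [hexp]
    ring

lemma A_rec (c : ℝ) (hc : 0 < c) (K : ℕ) :
    A c (K+2) = (1+c) * A c (K+1) + ∑ i ∈ range K, A c (i+1) * A c (K-i) := by
  have h1 := A_diff c hc K
  have h2 := A_quad c hc K
  linarith

lemma A_eq_pp (c : ℝ) (hc : 0 < c) : ∀ n, 1 ≤ n → A c n = pp c n := by
  intro n
  induction n using Nat.strong_induction_on with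
  | _ n ih =>
    intro hn
    match n, hn with
    | 1, _ =>
      rw [A_one, pp_succ, pp_zero]
      simp
    | (K+2), _ =>
      rw [pp_succ, Finset.sum_range_succ]
      have e1 : K+1-1-K = 0 := by omega
      rw [e1]
      rw [pp_zero, mul_one]
      have hppK : pp c (K+1) = A c (K+1) := (ih (K+1) (by omega) (by omega)).symm
      rw [hppK]
      have hsum : ∑ i ∈ range K, pp c (i+1) * pp c (K+1-1-i)
          = ∑ i ∈ range K, A c (i+1) * A c (K-i) := by
        apply Finset.sum_congr rfl
        intro i hi
        have hiK : i < K := Finset.mem_range.mp hi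
        have e3 : K+1-1-i = K-i := by omega
        rw [e3]
        rw [← ih (i+1) (by omega) (by omega), ← ih (K-i) (by omega) (by omega)]
      rw [hsum, A_rec c hc K]
      ring

open intervalIntegral Real in
lemma S_even (m : ℕ) : ∫ x in (-(π/2))..(π/2), sin x ^ (2*m)
    = π * ∏ i ∈ range m, (2*(i:ℝ)+1)/(2*i+2) := by
  induction m with
  | zero => simp
  | succ m ih =>
    have h : 2*(m+1) = 2*m+2 := by ring
    rw [h, integral_sin_pow]
    rw [Real.cos_pi_div_two, show Real.cos (-(π/2)) = 0 by simp]
    rw [ih, Finset.prod_range_succ]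
    push_cast
    ring

open intervalIntegral Real in
lemma S_odd (m : ℕ) : ∫ x in (-(π/2))..(π/2), sin x ^ (2*m+1) = 0 := by
  induction m with
  | zero =>
    simp
  | succ m ih =>
    have h : 2*(m+1)+1 = (2*m+1)+2 := by ring
    rw [h, integral_sin_pow]
    rw [Real.cos_pi_div_two, show Real.cos (-(π/2)) = 0 by simp, ih]
    ring

open intervalIntegral Real in
lemma sinpow_cossq (j : ℕ) : (∫ x in (-(π/2))..(π/2), sin x ^ j * cos x ^ 2)
    = (∫ x in (-(π/2))..(π/2), sin x ^ j) - ∫ x in (-(π/2))..(π/2), sin x ^ (j+2) := by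
  have h : ∀ x : ℝ, sin x ^ j * cos x ^ 2 = sin x ^ j - sin x ^ (j+2) := by
    intro x
    have := sin_sq_add_cos_sq x
    have hc : cos x ^ 2 = 1 - sin x ^ 2 := by linarith
    rw [hc, pow_add]
    ring
  rw [intervalIntegral.integral_congr (g := fun x => sin x ^ j - sin x ^ (j+2))
    (fun x _ => h x)]
  rw [intervalIntegral.integral_sub (f := fun x => sin x ^ j) (g := fun x => sin x ^ (j+2))
    ((continuous_sin.pow j).intervalIntegrable _ _)
    ((continuous_sin.pow (j+2)).intervalIntegrable _ _)]

open intervalIntegral Real in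
lemma Ival (j : ℕ) : (∫ x in (-1:ℝ)..1, x ^ j * √(1 - x^2))
    = ∫ x in (-(π/2))..(π/2), sin x ^ j * cos x ^ 2 := by
  have hf : Continuous fun u : ℝ => u ^ j * √(1 - u^2) := by
    apply Continuous.mul (continuous_pow j)
    exact Real.continuous_sqrt.comp (by continuity)
  calc (∫ x in (-1:ℝ)..1, x ^ j * √(1 - x^2))
      = ∫ x in sin (-(π/2))..sin (π/2), x ^ j * √(1 - x^2) := by
        rw [Real.sin_neg, Real.sin_pi_div_two]
    _ = ∫ x in (-(π/2))..(π/2), ((fun u : ℝ => u ^ j * √(1 - u^2)) ∘ sin) x * cos x := by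
        rw [integral_comp_mul_deriv (fun x _ => Real.hasDerivAt_sin x)
          Real.continuousOn_cos hf]
    _ = ∫ x in (-(π/2))..(π/2), sin x ^ j * cos x ^ 2 := by
        refine intervalIntegral.integral_congr (fun x hx => ?_)
        rw [Set.uIcc_of_le (by linarith [Real.pi_pos]), Set.mem_Icc] at hx
        have : √(1 - sin x ^ 2) = cos x :=
          (Real.cos_eq_sqrt_one_sub_sin_sq hx.1 hx.2).symm
        simp only [Function.comp]
        rw [this]
        ring

lemma wallis_prod (m : ℕ) : (∏ i ∈ range m, (2*(i:ℝ)+1)/(2*i+2))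
    = (Nat.centralBinom m : ℝ) / 4^m := by
  induction m with
  | zero => simp [Nat.centralBinom]
  | succ m ih =>
    rw [Finset.prod_range_succ, ih]
    have h := Nat.succ_mul_centralBinom_succ m
    have hcast : ((m:ℝ)+1) * (Nat.centralBinom (m+1) : ℝ)
        = 2 * (2*m+1) * (Nat.centralBinom m : ℝ) := by exact_mod_cast h
    have h4 : (4:ℝ)^(m+1) = 4 * 4^m := by ring
    rw [h4]
    field_simp
    nlinarith [pow_pos (show (0:ℝ) < 4 by norm_num) m, hcast]

lemma I_even (m : ℕ) : (∫ x in (-1:ℝ)..1, x ^ (2*m) * Real.sqrt (1 - x^2))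
    = Real.pi/2 * (catalan m : ℝ) / 4^m := by
  rw [Ival, sinpow_cossq, show 2*m+2 = 2*(m+1) by ring, S_even, S_even,
    Finset.prod_range_succ, wallis_prod]
  have hcb : (Nat.centralBinom m : ℝ) = ((m:ℝ)+1) * (catalan m : ℝ) := by
    exact_mod_cast (succ_mul_catalan_eq_centralBinom m).symm
  rw [hcb]
  have h1 : (2*(m:ℝ)+2) ≠ 0 := by positivity
  have h2 : (4:ℝ)^m ≠ 0 := by positivity
  field_simp
  ring

lemma I_odd (m : ℕ) : (∫ x in (-1:ℝ)..1, x ^ (2*m+1) * Real.sqrt (1 - x^2)) = 0 := by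
  rw [Ival, sinpow_cossq, show 2*m+1+2 = 2*(m+1)+1 by ring, S_odd, S_odd]
  ring

open intervalIntegral Real in
lemma moment_eq (c : ℝ) (hc : 0 < c) (n' : ℕ) :
    (∫ x in ((1 - Real.sqrt c)^2)..((1 + Real.sqrt c)^2),
        x ^ (n'+1) * Real.sqrt (((1 + Real.sqrt c)^2 - x) * (x - (1 - Real.sqrt c)^2))
          / (2 * Real.pi * x))
      = A c (n'+1) := by
  set s : ℝ := Real.sqrt c with hsdef
  have hs : 0 < s := Real.sqrt_pos.mpr hc
  have hs2 : s^2 = c := Real.sq_sqrt hc.le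
  set aa : ℝ := (1-s)^2 with haa
  set bb : ℝ := (1+s)^2 with hbb
  set g : ℝ → ℝ := fun x => x^n' * Real.sqrt ((bb-x)*(x-aa)) * (2*π)⁻¹ with hg
  -- Step 1: a.e. rewrite of the integrand
  have step1 : (∫ x in aa..bb,
      x ^ (n'+1) * Real.sqrt ((bb - x) * (x - aa)) / (2 * π * x)) = ∫ x in aa..bb, g x := by
    apply intervalIntegral.integral_congr_ae
    have h0 : ∀ᵐ x : ℝ, x ≠ (0:ℝ) := by
      rw [MeasureTheory.ae_iff]
      have hset : {x : ℝ | ¬ x ≠ 0} = {0} := by ext y; simp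
      rw [hset]
      exact MeasureTheory.measure_singleton 0
    filter_upwards [h0] with x hx _
    simp only [hg]
    rw [pow_succ]
    field_simp
  rw [step1]
  -- Step 2: linear substitution x = 1 + c + 2 s t
  have hend1 : 1+c+2*s*(-1) = aa := by rw [haa, ← hs2]; ring
  have hend2 : 1+c+2*s*1 = bb := by rw [hbb, ← hs2]; ring
  have step2 : (∫ x in aa..bb, g x) = (2*s) • ∫ t in (-1:ℝ)..1, g (1+c+2*s*t) := by
    rw [smul_integral_comp_add_mul g (2*s) (1+c), hend1, hend2]
  rw [step2]
  -- Step 3: pointwise simplification and binomial expansion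
  have hsq : ∀ t : ℝ, Real.sqrt ((bb-(1+c+2*s*t))*((1+c+2*s*t)-aa))
      = 2*s*Real.sqrt (1-t^2) := by
    intro t
    have h1 : (bb-(1+c+2*s*t))*((1+c+2*s*t)-aa) = (2*s)^2 * (1-t^2) := by
      rw [hbb, haa, ← hs2]; ring
    rw [h1, Real.sqrt_mul (by positivity), Real.sqrt_sq (by positivity)]
  have hpt : ∀ t : ℝ, g (1+c+2*s*t) = ∑ j ∈ range (n'+1),
      ((Nat.choose n' j : ℝ) * (2*s)^j * (1+c)^(n'-j) * (2*s) * (2*π)⁻¹)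
        * (t^j * Real.sqrt (1-t^2)) := by
    intro t
    simp only [hg]
    rw [hsq t]
    have hbin : (1+c+2*s*t)^n' = ∑ j ∈ range (n'+1),
        (2*s*t)^j * (1+c)^(n'-j) * (Nat.choose n' j : ℝ) := by
      rw [show 1+c+2*s*t = 2*s*t + (1+c) from by ring, add_pow]
    rw [hbin, Finset.sum_mul, Finset.sum_mul]
    apply Finset.sum_congr rfl
    intro j _
    rw [mul_pow (2*s) t j]
    ring
  rw [intervalIntegral.integral_congr (fun t _ => hpt t)]
  have hcont : ∀ j : ℕ, Continuous fun t : ℝ => t^j * Real.sqrt (1-t^2) := by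
    intro j
    exact (continuous_pow j).mul (Real.continuous_sqrt.comp (by continuity))
  rw [intervalIntegral.integral_finset_sum (f := fun j t =>
      ((Nat.choose n' j : ℝ) * (2*s)^j * (1+c)^(n'-j) * (2*s) * (2*π)⁻¹)
        * (t^j * Real.sqrt (1-t^2))) (fun j _ =>
    ((continuous_const.mul (hcont j)).intervalIntegrable (-1) 1))]
  have hIconst : ∀ j ∈ range (n'+1),
      (∫ t in (-1:ℝ)..1, ((Nat.choose n' j : ℝ) * (2*s)^j * (1+c)^(n'-j) * (2*s) * (2*π)⁻¹)
        * (t^j * Real.sqrt (1-t^2)))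
      = ((Nat.choose n' j : ℝ) * (2*s)^j * (1+c)^(n'-j) * (2*s) * (2*π)⁻¹)
          * ∫ t in (-1:ℝ)..1, t^j * Real.sqrt (1-t^2) := by
    intro j _
    exact intervalIntegral.integral_const_mul _ _
  rw [Finset.sum_congr rfl hIconst]
  -- Step 4: evaluate the even/odd integrals
  set F : ℕ → ℝ := fun j => ((Nat.choose n' j : ℝ) * (2*s)^j * (1+c)^(n'-j) * (2*s) * (2*π)⁻¹)
      * ∫ t in (-1:ℝ)..1, t^j * Real.sqrt (1-t^2) with hF
  have hext : ∑ j ∈ range (n'+1), F j = ∑ j ∈ range (2*(n'+1)), F j := by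
    apply Finset.sum_subset (Finset.range_subset_range.mpr (by omega))
    intro j _ hj
    simp only [Finset.mem_range] at hj
    simp only [hF]
    rw [Nat.choose_eq_zero_of_lt (by omega)]
    simp
  rw [hext, sum_range_two_mul (n'+1) F]
  have hodd : ∑ m ∈ range (n'+1), F (2*m+1) = 0 := by
    apply Finset.sum_eq_zero
    intro m _
    simp only [hF]
    rw [I_odd m]
    simp
  rw [hodd, add_zero]
  have heven : ∀ m ∈ range (n'+1), F (2*m)
      = (Nat.choose n' (2*m) : ℝ) * (1+c)^(n'-2*m) * s * (catalan m : ℝ) * c^m * π * (2*π)⁻¹ := by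
    intro m _
    simp only [hF]
    rw [I_even m]
    have h4 : (2*s)^(2*m) = 4^m * c^m := by
      rw [pow_mul, show (2*s)^2 = 4*c from by rw [← hs2]; ring, mul_pow]
    rw [h4]
    have h4m : (4:ℝ)^m ≠ 0 := by positivity
    field_simp
  rw [Finset.sum_congr rfl heven]
  -- Step 5: match with A
  rw [A_succ_eq, Finset.mul_sum, Finset.smul_sum]
  apply Finset.sum_congr rfl
  intro m _
  rcases le_or_gt (2*m) n' with h2m | h2m
  · have hzp : (1+c)^((n':ℤ)-2*(m:ℤ)) = (1+c)^((n'-2*m : ℕ)) := by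
      rw [← zpow_natCast]
      congr 1
      push_cast [Nat.cast_sub h2m]
      ring
    rw [hzp, smul_eq_mul]
    have hpi : (π:ℝ) ≠ 0 := Real.pi_ne_zero
    field_simp
    linear_combination ((n'.choose (2*m) : ℝ) * (catalan m : ℝ)) * hs2
  · rw [Nat.choose_eq_zero_of_lt h2m]
    simp

/-! ### Non-crossing partitions of finite sets of naturals -/

def NCross (P : Finset (Finset ℕ)) : Prop :=
  ∀ B₁ ∈ P, ∀ B₂ ∈ P, ∀ a ∈ B₁, ∀ b ∈ B₂, ∀ x ∈ B₁, ∀ d ∈ B₂,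
    a < b → b < x → x < d → B₁ = B₂

open Classical in
noncomputable def NCP (s : Finset ℕ) : Finset (Finset (Finset ℕ)) :=
  s.powerset.powerset.filter
    (fun P => (∀ B ∈ P, B.Nonempty) ∧ (∀ x ∈ s, ∃! B, B ∈ P ∧ x ∈ B) ∧ NCross P)

lemma mem_NCP {s : Finset ℕ} {P : Finset (Finset ℕ)} : P ∈ NCP s ↔
    (∀ B ∈ P, B ⊆ s) ∧ (∀ B ∈ P, B.Nonempty) ∧ (∀ x ∈ s, ∃! B, B ∈ P ∧ x ∈ B)
      ∧ NCross P := by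
  classical
  rw [NCP, Finset.mem_filter, Finset.mem_powerset]
  constructor
  · rintro ⟨h1, h2, h3, h4⟩
    exact ⟨fun B hB => Finset.mem_powerset.mp (h1 hB), h2, h3, h4⟩
  · rintro ⟨h1, h2, h3, h4⟩
    exact ⟨fun B hB => Finset.mem_powerset.mpr (h1 B hB), h2, h3, h4⟩

noncomputable def blk (P : Finset (Finset ℕ)) (x : ℕ) : Finset ℕ :=
  (P.filter (fun B => x ∈ B)).sup id

lemma blk_eq {P : Finset (Finset ℕ)} {x : ℕ} {B : Finset ℕ}
    (hu : ∃! C, C ∈ P ∧ x ∈ C) (hB : B ∈ P) (hx : x ∈ B) : blk P x = B := by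
  have hfil : P.filter (fun C => x ∈ C) = {B} := by
    ext C
    simp only [Finset.mem_filter, Finset.mem_singleton]
    constructor
    · rintro ⟨hCP, hxC⟩
      exact hu.unique ⟨hCP, hxC⟩ ⟨hB, hx⟩
    · rintro rfl
      exact ⟨hB, hx⟩
  rw [blk, hfil, Finset.sup_singleton]
  rfl

lemma sup_id_mem {t : Finset ℕ} (ht : t.Nonempty) : t.sup id ∈ t := by
  rw [← Finset.sup'_eq_sup ht id, ← Finset.max'_eq_sup' ]
  exact t.max'_mem ht

lemma NCP_empty : NCP ∅ = {∅} := by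
  ext P
  rw [mem_NCP, Finset.mem_singleton]
  constructor
  · rintro ⟨h1, h2, _, _⟩
    by_contra hP
    obtain ⟨B, hB⟩ := Finset.nonempty_iff_ne_empty.mpr hP
    obtain ⟨x, hx⟩ := h2 B hB
    exact absurd (h1 B hB hx) (by simp)
  · rintro rfl
    refine ⟨by simp, by simp, by simp, ?_⟩
    intro B₁ hB₁
    simp at hB₁

lemma blocks_disjoint {s : Finset ℕ} {P : Finset (Finset ℕ)} (hP : P ∈ NCP s)
    {B₁ B₂ : Finset ℕ} (h₁ : B₁ ∈ P) (h₂ : B₂ ∈ P) {x : ℕ} (hx₁ : x ∈ B₁) (hx₂ : x ∈ B₂) :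
    B₁ = B₂ := by
  obtain ⟨hsub, _, hcov, _⟩ := mem_NCP.mp hP
  have hxs : x ∈ s := hsub B₁ h₁ hx₁
  exact (hcov x hxs).unique ⟨h₁, hx₁⟩ ⟨h₂, hx₂⟩

/-- Case A: partitions where `{M}` is a singleton block. -/
lemma sumA (c : ℝ) (s : Finset ℕ) (M : ℕ) (hM : M ∈ s) :
    ∑ P ∈ (NCP s).filter (fun P => {M} ∈ P), c ^ P.card
      = c * ∑ Q ∈ NCP (s.erase M), c ^ Q.card := by
  classical
  rw [Finset.mul_sum]
  refine Finset.sum_nbij' (fun P => P.erase {M}) (fun Q => insert {M} Q) ?_ ?_ ?_ ?_ ?_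
  · -- forward membership
    intro P hP
    rw [Finset.mem_filter] at hP
    obtain ⟨hPs, hMP⟩ := hP
    obtain ⟨hsub, hne, hcov, hnc⟩ := mem_NCP.mp hPs
    rw [mem_NCP]
    refine ⟨?_, ?_, ?_, ?_⟩
    · intro B hB
      rw [Finset.mem_erase] at hB
      intro y hy
      rw [Finset.mem_erase]
      refine ⟨?_, hsub B hB.2 hy⟩
      intro hyM
      subst hyM
      exact hB.1 (blocks_disjoint hPs hB.2 hMP hy (by simp))
    · intro B hB
      exact hne B (Finset.mem_of_mem_erase hB)
    · intro x hx
      rw [Finset.mem_erase] at hx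
      obtain ⟨B, ⟨hB, hxB⟩, huniq⟩ := hcov x hx.2
      have hBne : B ≠ {M} := by
        rintro rfl
        exact hx.1 (Finset.mem_singleton.mp hxB)
      refine ⟨B, ⟨Finset.mem_erase.mpr ⟨hBne, hB⟩, hxB⟩, ?_⟩
      rintro C ⟨hC, hxC⟩
      exact huniq C ⟨Finset.mem_of_mem_erase hC, hxC⟩
    · intro B₁ h₁ B₂ h₂ a ha b hb x hx d hd hab hbx hxd
      exact hnc B₁ (Finset.mem_of_mem_erase h₁) B₂ (Finset.mem_of_mem_erase h₂)
        a ha b hb x hx d hd hab hbx hxd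
  · -- backward membership
    intro Q hQ
    obtain ⟨hsub, hne, hcov, hnc⟩ := mem_NCP.mp hQ
    have hMnotin : {M} ∉ Q := by
      intro h
      have := hsub _ h (Finset.mem_singleton_self M)
      rw [Finset.mem_erase] at this
      exact this.1 rfl
    have hMnotB : ∀ B ∈ Q, M ∉ B := by
      intro B hB hMB
      have := hsub B hB hMB
      rw [Finset.mem_erase] at this
      exact this.1 rfl
    rw [Finset.mem_filter]
    refine ⟨?_, Finset.mem_insert_self _ _⟩
    rw [mem_NCP]
    refine ⟨?_, ?_, ?_, ?_⟩
    · intro B hB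
      rcases Finset.mem_insert.mp hB with rfl | hB
      · intro y hy
        rw [Finset.mem_singleton.mp hy]
        exact hM
      · exact fun y hy => Finset.mem_of_mem_erase (hsub B hB hy)
    · intro B hB
      rcases Finset.mem_insert.mp hB with rfl | hB
      · exact ⟨M, Finset.mem_singleton_self M⟩
      · exact hne B hB
    · intro x hx
      by_cases hxM : x = M
      · subst hxM
        refine ⟨{x}, ⟨Finset.mem_insert_self _ _, Finset.mem_singleton_self _⟩, ?_⟩
        rintro C ⟨hC, hxC⟩
        rcases Finset.mem_insert.mp hC with rfl | hC
        · rfl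
        · exact absurd hxC (hMnotB C hC)
      · obtain ⟨B, ⟨hB, hxB⟩, huniq⟩ := hcov x (Finset.mem_erase.mpr ⟨hxM, hx⟩)
        refine ⟨B, ⟨Finset.mem_insert_of_mem hB, hxB⟩, ?_⟩
        rintro C ⟨hC, hxC⟩
        rcases Finset.mem_insert.mp hC with rfl | hC
        · exact absurd (Finset.mem_singleton.mp hxC) hxM
        · exact huniq C ⟨hC, hxC⟩
    · intro B₁ h₁ B₂ h₂ a ha b hb x hx d hd hab hbx hxd
      rcases Finset.mem_insert.mp h₁ with rfl | h₁
      · have ha' := Finset.mem_singleton.mp ha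
        have hx' := Finset.mem_singleton.mp hx
        omega
      · rcases Finset.mem_insert.mp h₂ with rfl | h₂
        · have hb' := Finset.mem_singleton.mp hb
          have hd' := Finset.mem_singleton.mp hd
          omega
        · exact hnc B₁ h₁ B₂ h₂ a ha b hb x hx d hd hab hbx hxd
  · -- left inverse
    intro P hP
    rw [Finset.mem_filter] at hP
    exact Finset.insert_erase hP.2
  · -- right inverse
    intro Q hQ
    obtain ⟨hsub, _, _, _⟩ := mem_NCP.mp hQ
    apply Finset.erase_insert
    intro h
    have := hsub _ h (Finset.mem_singleton_self M)
    rw [Finset.mem_erase] at this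
    exact this.1 rfl
  · -- weights
    intro P hP
    rw [Finset.mem_filter] at hP
    rw [Finset.card_erase_of_mem hP.2, ← pow_succ']
    congr 1
    have : 0 < P.card := Finset.card_pos.mpr ⟨{M}, hP.2⟩
    omega

noncomputable def jjF (M : ℕ) (P : Finset (Finset ℕ)) : ℕ := ((blk P M).erase M).sup id

noncomputable def phi1 (s : Finset ℕ) (M : ℕ) (P : Finset (Finset ℕ)) : Finset (Finset ℕ) :=
  insert ((blk P M).erase M) (P.filter (fun B => B ⊆ s.filter (· ≤ jjF M P)))

noncomputable def phi2 (s : Finset ℕ) (M : ℕ) (P : Finset (Finset ℕ)) : Finset (Finset ℕ) :=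
  P.filter (fun B => B ⊆ s.filter (fun x => jjF M P < x ∧ x < M))

noncomputable def psiF (M : ℕ) (j : ℕ) (Q R : Finset (Finset ℕ)) : Finset (Finset ℕ) :=
  insert (insert M (blk Q j)) ((Q.erase (blk Q j)) ∪ R)

lemma forwardFacts {s : Finset ℕ} {M : ℕ} (hM : M ∈ s) (hmax : ∀ y ∈ s, y ≤ M)
    {P : Finset (Finset ℕ)} (hP : P ∈ NCP s) (hMs : {M} ∉ P) :
    jjF M P ∈ s.erase M
    ∧ phi1 s M P ∈ NCP (s.filter (· ≤ jjF M P))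
    ∧ phi2 s M P ∈ NCP (s.filter (fun x => jjF M P < x ∧ x < M))
    ∧ P.card = (phi1 s M P).card + (phi2 s M P).card
    ∧ psiF M (jjF M P) (phi1 s M P) (phi2 s M P) = P := by
  classical
  obtain ⟨hsub, hne, hcov, hnc⟩ := mem_NCP.mp hP
  set B := blk P M with hB
  have huM := hcov M hM
  obtain ⟨B₀, ⟨hB₀P, hMB₀⟩, _⟩ := huM
  have hBeq : B = B₀ := blk_eq (hcov M hM) hB₀P hMB₀
  have hBP : B ∈ P := hBeq ▸ hB₀P
  have hMB : M ∈ B := hBeq ▸ hMB₀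
  have hBneM : B ≠ {M} := fun h => hMs (h ▸ hBP)
  have hBe : (B.erase M).Nonempty := by
    rcases Finset.eq_empty_or_nonempty (B.erase M) with he | h
    · exfalso
      apply hBneM
      apply Finset.eq_singleton_iff_unique_mem.mpr
      refine ⟨hMB, fun y hy => ?_⟩
      by_contra hyne
      exact absurd (he ▸ Finset.mem_erase.mpr ⟨hyne, hy⟩) (Finset.notMem_empty y)
    · exact h
  set j := jjF M P with hjdef
  have hjBe : j ∈ B.erase M := by
    rw [hjdef, jjF, ← hB]
    exact sup_id_mem hBe
  have hjB : j ∈ B := Finset.mem_of_mem_erase hjBe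
  have hjne : j ≠ M := (Finset.mem_erase.mp hjBe).1
  have hjs : j ∈ s := hsub B hBP hjB
  have hjM : j < M := lt_of_le_of_ne (hmax j hjs) hjne
  have hjmax : ∀ y ∈ B, y ≠ M → y ≤ j := by
    intro y hy hyne
    have : y ∈ B.erase M := Finset.mem_erase.mpr ⟨hyne, hy⟩
    have h1 : (id y : ℕ) ≤ (B.erase M).sup id := Finset.le_sup this
    rw [hjdef, jjF, ← hB]
    exact h1
  have hMonly : ∀ C ∈ P, C ≠ B → M ∉ C := by
    intro C hC hCB hMC
    exact hCB (blocks_disjoint hP hC hBP hMC hMB)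
  have hltM : ∀ C ∈ P, C ≠ B → ∀ y ∈ C, y < M := by
    intro C hC hCB y hy
    have hys : y ∈ s := hsub C hC hy
    have : y ≠ M := fun h => hMonly C hC hCB (h ▸ hy)
    exact lt_of_le_of_ne (hmax y hys) this
  set t1 : Finset ℕ := s.filter (· ≤ j) with ht1
  set t2 : Finset ℕ := s.filter (fun x => j < x ∧ x < M) with ht2
  have hmem_t1 : ∀ y, y ∈ t1 ↔ y ∈ s ∧ y ≤ j := by intro y; simp [ht1]
  have hmem_t2 : ∀ y, y ∈ t2 ↔ y ∈ s ∧ j < y ∧ y < M := by intro y; simp [ht2]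
  have L1 : ∀ C ∈ P, C ≠ B → C ⊆ t1 ∨ C ⊆ t2 := by
    intro C hC hCB
    by_cases hCs : C ⊆ t1
    · exact Or.inl hCs
    · right
      obtain ⟨u, hu, hut⟩ := Finset.not_subset.mp hCs
      have hus : u ∈ s := hsub C hC hu
      have hju : j < u := by
        by_contra h
        exact hut ((hmem_t1 u).mpr ⟨hus, by omega⟩)
      have huM : u < M := hltM C hC hCB u hu
      intro w hw
      have hws : w ∈ s := hsub C hC hw
      have hwM : w < M := hltM C hC hCB w hw
      rw [hmem_t2]
      refine ⟨hws, ?_, hwM⟩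
      by_contra hwj
      push_neg at hwj
      rcases Nat.lt_or_ge w j with hwlt | hwge
      · exact hCB (hnc C hC B hBP w hw j hjB u hu M hMB hwlt hju huM)
      · have : w = j := by omega
        exact hCB (blocks_disjoint hP hC hBP (this ▸ hw) hjB)
  have hBer_sub : B.erase M ⊆ t1 := by
    intro y hy
    rw [Finset.mem_erase] at hy
    exact (hmem_t1 y).mpr ⟨hsub B hBP hy.2, hjmax y hy.2 hy.1⟩
  have hBnot1 : B ∉ P.filter (fun C => C ⊆ t1) := by
    rw [Finset.mem_filter]
    rintro ⟨-, hBt⟩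
    have := (hmem_t1 M).mp (hBt hMB)
    omega
  have hBnot2 : B ∉ P.filter (fun C => C ⊆ t2) := by
    rw [Finset.mem_filter]
    rintro ⟨-, hBt⟩
    have := (hmem_t2 M).mp (hBt hMB)
    omega
  have hdecomp : P = insert B ((P.filter (fun C => C ⊆ t1)) ∪ (P.filter (fun C => C ⊆ t2))) := by
    ext C
    constructor
    · intro hC
      by_cases hCB : C = B
      · exact hCB ▸ Finset.mem_insert_self _ _
      · apply Finset.mem_insert_of_mem
        rcases L1 C hC hCB with h | h
        · exact Finset.mem_union_left _ (Finset.mem_filter.mpr ⟨hC, h⟩)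
        · exact Finset.mem_union_right _ (Finset.mem_filter.mpr ⟨hC, h⟩)
    · intro hC
      rcases Finset.mem_insert.mp hC with rfl | hC
      · exact hBP
      · rcases Finset.mem_union.mp hC with h | h
        · exact (Finset.mem_filter.mp h).1
        · exact (Finset.mem_filter.mp h).1
  have hdisj12 : Disjoint (P.filter (fun C => C ⊆ t1)) (P.filter (fun C => C ⊆ t2)) := by
    rw [Finset.disjoint_left]
    intro C hC1 hC2
    obtain ⟨y, hy⟩ := hne C (Finset.mem_filter.mp hC1).1
    have h1 := (hmem_t1 y).mp ((Finset.mem_filter.mp hC1).2 hy)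
    have h2 := (hmem_t2 y).mp ((Finset.mem_filter.mp hC2).2 hy)
    omega
  have hBerase_notP : B.erase M ∉ P := by
    intro h
    have heq : B.erase M = B := blocks_disjoint hP h hBP hjBe hjB
    have : M ∈ B.erase M := by rw [heq]; exact hMB
    simp at this
  have hphi1 : phi1 s M P = insert (B.erase M) (P.filter (fun C => C ⊆ t1)) := rfl
  have hphi2 : phi2 s M P = P.filter (fun C => C ⊆ t2) := rfl
  have hBer_not_f1 : B.erase M ∉ P.filter (fun C => C ⊆ t1) := by
    rw [Finset.mem_filter]
    rintro ⟨h, -⟩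
    exact hBerase_notP h
  -- cover for phi1
  have hcov1 : ∀ x ∈ t1, ∃! C, C ∈ phi1 s M P ∧ x ∈ C := by
    intro x hx
    obtain ⟨hxs, hxj⟩ := (hmem_t1 x).mp hx
    obtain ⟨C, ⟨hC, hxC⟩, -⟩ := hcov x hxs
    by_cases hCB : C = B
    · have hxB : x ∈ B := hCB ▸ hxC
      have hxBe : x ∈ B.erase M := Finset.mem_erase.mpr ⟨by omega, hxB⟩
      refine ⟨B.erase M, ⟨Finset.mem_insert_self _ _, hxBe⟩, ?_⟩
      rintro D ⟨hD, hxD⟩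
      rcases Finset.mem_insert.mp hD with rfl | hD
      · rfl
      · exfalso
        have hDP := (Finset.mem_filter.mp hD).1
        have hDB : D = B := blocks_disjoint hP hDP hBP hxD hxB
        exact hBnot1 (hDB ▸ hD)
    · have hCt1 : C ⊆ t1 := by
        rcases L1 C hC hCB with h | h
        · exact h
        · exfalso
          have := (hmem_t2 x).mp (h hxC)
          omega
      refine ⟨C, ⟨Finset.mem_insert_of_mem (Finset.mem_filter.mpr ⟨hC, hCt1⟩), hxC⟩, ?_⟩
      rintro D ⟨hD, hxD⟩
      rcases Finset.mem_insert.mp hD with rfl | hD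
      · exfalso
        have hxB : x ∈ B := Finset.mem_of_mem_erase hxD
        exact hCB (blocks_disjoint hP hC hBP hxC hxB)
      · exact blocks_disjoint hP (Finset.mem_filter.mp hD).1 hC hxD hxC
  have hmem1 : phi1 s M P ∈ NCP t1 := by
    rw [mem_NCP]
    refine ⟨?_, ?_, hcov1, ?_⟩
    · intro C hC
      rcases Finset.mem_insert.mp hC with rfl | hC
      · exact hBer_sub
      · exact (Finset.mem_filter.mp hC).2
    · intro C hC
      rcases Finset.mem_insert.mp hC with rfl | hC
      · exact hBe
      · exact hne C (Finset.mem_filter.mp hC).1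
    · intro C₁ h₁ C₂ h₂ a ha b hb x hx d hd hab hbx hxd
      rcases Finset.mem_insert.mp h₁ with rfl | h₁
      · rcases Finset.mem_insert.mp h₂ with rfl | h₂
        · rfl
        · exfalso
          obtain ⟨h₂P, h₂t⟩ := Finset.mem_filter.mp h₂
          have haB : a ∈ B := Finset.mem_of_mem_erase ha
          have hxB : x ∈ B := Finset.mem_of_mem_erase hx
          have heq : B = C₂ := hnc B hBP C₂ h₂P a haB b hb x hxB d hd hab hbx hxd
          have := (hmem_t1 M).mp (h₂t (heq ▸ hMB))
          omega
      · rcases Finset.mem_insert.mp h₂ with rfl | h₂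
        · exfalso
          obtain ⟨h₁P, h₁t⟩ := Finset.mem_filter.mp h₁
          have hbB : b ∈ B := Finset.mem_of_mem_erase hb
          have hdB : d ∈ B := Finset.mem_of_mem_erase hd
          have heq : C₁ = B := hnc C₁ h₁P B hBP a ha b hbB x hx d hdB hab hbx hxd
          have := (hmem_t1 M).mp (h₁t (heq ▸ hMB))
          omega
        · exact hnc C₁ (Finset.mem_filter.mp h₁).1 C₂ (Finset.mem_filter.mp h₂).1
            a ha b hb x hx d hd hab hbx hxd
  have hmem2 : phi2 s M P ∈ NCP t2 := by
    rw [mem_NCP]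
    refine ⟨?_, ?_, ?_, ?_⟩
    · intro C hC
      exact (Finset.mem_filter.mp hC).2
    · intro C hC
      exact hne C (Finset.mem_filter.mp hC).1
    · intro x hx
      obtain ⟨hxs, hxj, hxM⟩ := (hmem_t2 x).mp hx
      obtain ⟨C, ⟨hC, hxC⟩, -⟩ := hcov x hxs
      have hCB : C ≠ B := by
        rintro rfl
        have : x ≤ j := hjmax x hxC (by omega)
        omega
      have hCt2 : C ⊆ t2 := by
        rcases L1 C hC hCB with h | h
        · exfalso
          have := (hmem_t1 x).mp (h hxC)
          omega
        · exact h
      refine ⟨C, ⟨Finset.mem_filter.mpr ⟨hC, hCt2⟩, hxC⟩, ?_⟩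
      rintro D ⟨hD, hxD⟩
      exact blocks_disjoint hP (Finset.mem_filter.mp hD).1 hC hxD hxC
    · intro C₁ h₁ C₂ h₂ a ha b hb x hx d hd hab hbx hxd
      exact hnc C₁ (Finset.mem_filter.mp h₁).1 C₂ (Finset.mem_filter.mp h₂).1
        a ha b hb x hx d hd hab hbx hxd
  have hcard : P.card = (phi1 s M P).card + (phi2 s M P).card := by
    rw [hphi1, hphi2]
    rw [Finset.card_insert_of_notMem hBer_not_f1]
    conv_lhs => rw [hdecomp]
    rw [Finset.card_insert_of_notMem (by
      rw [Finset.mem_union]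
      rintro (h | h)
      · exact hBnot1 h
      · exact hBnot2 h)]
    rw [Finset.card_union_of_disjoint hdisj12]
    omega
  refine ⟨Finset.mem_erase.mpr ⟨hjne, hjs⟩, hmem1, hmem2, hcard, ?_⟩
  -- round trip
  have hblk1 : blk (phi1 s M P) j = B.erase M := by
    apply blk_eq (hcov1 j ((hmem_t1 j).mpr ⟨hjs, le_refl j⟩))
      (Finset.mem_insert_self _ _) hjBe
  rw [psiF, hblk1, Finset.insert_erase hMB, hphi1, Finset.erase_insert hBer_not_f1, hphi2]
  exact hdecomp.symm

lemma backwardFacts {s : Finset ℕ} {M : ℕ} (hM : M ∈ s) (hmax : ∀ y ∈ s, y ≤ M)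
    {j : ℕ} (hj : j ∈ s.erase M)
    {Q R : Finset (Finset ℕ)} (hQ : Q ∈ NCP (s.filter (· ≤ j)))
    (hR : R ∈ NCP (s.filter (fun x => j < x ∧ x < M))) :
    psiF M j Q R ∈ NCP s
    ∧ {M} ∉ psiF M j Q R
    ∧ jjF M (psiF M j Q R) = j
    ∧ phi1 s M (psiF M j Q R) = Q
    ∧ phi2 s M (psiF M j Q R) = R
    ∧ (psiF M j Q R).card = Q.card + R.card := by
  classical
  obtain ⟨hsub₁, hne₁, hcov₁, hnc₁⟩ := mem_NCP.mp hQ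
  obtain ⟨hsub₂, hne₂, hcov₂, hnc₂⟩ := mem_NCP.mp hR
  have hjne : j ≠ M := (Finset.mem_erase.mp hj).1
  have hjs : j ∈ s := (Finset.mem_erase.mp hj).2
  have hjM : j < M := lt_of_le_of_ne (hmax j hjs) hjne
  set t1 : Finset ℕ := s.filter (· ≤ j) with ht1
  set t2 : Finset ℕ := s.filter (fun x => j < x ∧ x < M) with ht2
  have hmem_t1 : ∀ y, y ∈ t1 ↔ y ∈ s ∧ y ≤ j := by intro y; simp [ht1]
  have hmem_t2 : ∀ y, y ∈ t2 ↔ y ∈ s ∧ j < y ∧ y < M := by intro y; simp [ht2]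
  have hjt1 : j ∈ t1 := (hmem_t1 j).mpr ⟨hjs, le_refl j⟩
  set D := blk Q j with hDdef
  obtain ⟨D₀, ⟨hD₀, hjD₀⟩, -⟩ := hcov₁ j hjt1
  have hDeq : D = D₀ := blk_eq (hcov₁ j hjt1) hD₀ hjD₀
  have hDQ : D ∈ Q := hDeq ▸ hD₀
  have hjD : j ∈ D := hDeq ▸ hjD₀
  have hel₁ : ∀ C ∈ Q, ∀ y ∈ C, y ∈ s ∧ y ≤ j :=
    fun C hC y hy => (hmem_t1 y).mp (hsub₁ C hC hy)
  have hel₂ : ∀ C ∈ R, ∀ y ∈ C, y ∈ s ∧ j < y ∧ y < M :=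
    fun C hC y hy => (hmem_t2 y).mp (hsub₂ C hC hy)
  set E := insert M D with hE
  have hQn : psiF M j Q R = insert E ((Q.erase D) ∪ R) := rfl
  have hMD : M ∉ D := fun h => by have := (hel₁ D hDQ M h).2; omega
  have hME : M ∈ E := Finset.mem_insert_self _ _
  have hM_not_union : ∀ C ∈ (Q.erase D) ∪ R, M ∉ C := by
    intro C hC hMC
    rcases Finset.mem_union.mp hC with h | h
    · have := (hel₁ C (Finset.mem_of_mem_erase h) M hMC).2; omega
    · have := (hel₂ C h M hMC).2.2; omega
  have hE_not_union : E ∉ (Q.erase D) ∪ R := fun h => hM_not_union E h hME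
  have hdisjQR : Disjoint (Q.erase D) R := by
    rw [Finset.disjoint_left]
    intro C hC1 hC2
    obtain ⟨y, hy⟩ := hne₁ C (Finset.mem_of_mem_erase hC1)
    have h1 := (hel₁ C (Finset.mem_of_mem_erase hC1) y hy).2
    have h2 := (hel₂ C hC2 y hy).2.1
    omega
  have hcovQn : ∀ x ∈ s, ∃! C, C ∈ psiF M j Q R ∧ x ∈ C := by
    rw [hQn]
    intro x hxs
    by_cases hxM : x = M
    · subst hxM
      refine ⟨E, ⟨Finset.mem_insert_self _ _, hME⟩, ?_⟩
      rintro C ⟨hC, hxC⟩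
      rcases Finset.mem_insert.mp hC with rfl | hC'
      · rfl
      · exact absurd hxC (hM_not_union C hC')
    · have hxM' : x < M := lt_of_le_of_ne (hmax x hxs) hxM
      by_cases hxj : x ≤ j
      · obtain ⟨C, ⟨hCQ, hxC⟩, -⟩ := hcov₁ x ((hmem_t1 x).mpr ⟨hxs, hxj⟩)
        by_cases hCD : C = D
        · have hxD : x ∈ D := hCD ▸ hxC
          refine ⟨E, ⟨Finset.mem_insert_self _ _, Finset.mem_insert_of_mem hxD⟩, ?_⟩
          rintro C' ⟨hC', hxC'⟩
          rcases Finset.mem_insert.mp hC' with rfl | hC'u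
          · rfl
          · exfalso
            rcases Finset.mem_union.mp hC'u with h | h
            · have := blocks_disjoint hQ (Finset.mem_of_mem_erase h) hDQ hxC' hxD
              exact (Finset.mem_erase.mp h).1 this
            · have := (hel₂ C' h x hxC').2.1; omega
        · refine ⟨C, ⟨Finset.mem_insert_of_mem
            (Finset.mem_union_left _ (Finset.mem_erase.mpr ⟨hCD, hCQ⟩)), hxC⟩, ?_⟩
          rintro C' ⟨hC', hxC'⟩
          rcases Finset.mem_insert.mp hC' with rfl | hC'u
          · exfalso
            rcases Finset.mem_insert.mp hxC' with rfl | hxD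
            · exact hxM rfl
            · exact hCD (blocks_disjoint hQ hCQ hDQ hxC hxD)
          · rcases Finset.mem_union.mp hC'u with h | h
            · exact blocks_disjoint hQ (Finset.mem_of_mem_erase h) hCQ hxC' hxC
            · exfalso
              have := (hel₂ C' h x hxC').2.1; omega
      · push_neg at hxj
        obtain ⟨C, ⟨hCR, hxC⟩, -⟩ := hcov₂ x ((hmem_t2 x).mpr ⟨hxs, hxj, hxM'⟩)
        refine ⟨C, ⟨Finset.mem_insert_of_mem (Finset.mem_union_right _ hCR), hxC⟩, ?_⟩
        rintro C' ⟨hC', hxC'⟩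
        rcases Finset.mem_insert.mp hC' with rfl | hC'u
        · exfalso
          rcases Finset.mem_insert.mp hxC' with rfl | hxD
          · exact hxM rfl
          · have := (hel₁ D hDQ x hxD).2; omega
        · rcases Finset.mem_union.mp hC'u with h | h
          · exfalso
            have := (hel₁ C' (Finset.mem_of_mem_erase h) x hxC').2; omega
          · exact blocks_disjoint hR h hCR hxC' hxC
  have hncQn : NCross (psiF M j Q R) := by
    rw [hQn]
    intro C₁ h₁ C₂ h₂ a ha b hb x hx d hd hab hbx hxd
    rcases Finset.mem_insert.mp h₁ with rfl | h₁u
    · rcases Finset.mem_insert.mp h₂ with rfl | h₂u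
      · rfl
      · exfalso
        rcases Finset.mem_union.mp h₂u with h₂q | h₂r
        · have hbj : b ≤ j := (hel₁ _ (Finset.mem_of_mem_erase h₂q) b hb).2
          have hdj : d ≤ j := (hel₁ _ (Finset.mem_of_mem_erase h₂q) d hd).2
          have haD : a ∈ D := by
            rcases Finset.mem_insert.mp ha with rfl | h
            · omega
            · exact h
          have hxD : x ∈ D := by
            rcases Finset.mem_insert.mp hx with rfl | h
            · omega
            · exact h
          have := hnc₁ D hDQ C₂ (Finset.mem_of_mem_erase h₂q) a haD b hb x hxD d hd hab hbx hxd
          exact (Finset.mem_erase.mp h₂q).1 this.symm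
        · have hbj : j < b := (hel₂ _ h₂r b hb).2.1
          have hdM : d < M := (hel₂ _ h₂r d hd).2.2
          have hxD : x ∈ D := by
            rcases Finset.mem_insert.mp hx with rfl | h
            · omega
            · exact h
          have := (hel₁ D hDQ x hxD).2
          omega
    · rcases Finset.mem_insert.mp h₂ with rfl | h₂u
      · exfalso
        rcases Finset.mem_union.mp h₁u with h₁q | h₁r
        · have hxj : x ≤ j := (hel₁ _ (Finset.mem_of_mem_erase h₁q) x hx).2
          have hbD : b ∈ D := by
            rcases Finset.mem_insert.mp hb with rfl | h
            · omega
            · exact h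
          rcases Finset.mem_insert.mp hd with rfl | hdD
          · rcases Nat.lt_or_ge x j with hxlt | hxge
            · have := hnc₁ C₁ (Finset.mem_of_mem_erase h₁q) D hDQ a ha b hbD x hx j hjD hab hbx hxlt
              exact (Finset.mem_erase.mp h₁q).1 this
            · have hxj' : x = j := by omega
              have hxD : x ∈ D := by rw [hxj']; exact hjD
              have := blocks_disjoint hQ (Finset.mem_of_mem_erase h₁q) hDQ hx hxD
              exact (Finset.mem_erase.mp h₁q).1 this
          · have := hnc₁ C₁ (Finset.mem_of_mem_erase h₁q) D hDQ a ha b hbD x hx d hdD hab hbx hxd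
            exact (Finset.mem_erase.mp h₁q).1 this
        · have haj : j < a := (hel₂ _ h₁r a ha).2.1
          have hxM2 : x < M := (hel₂ _ h₁r x hx).2.2
          have hbD : b ∈ D := by
            rcases Finset.mem_insert.mp hb with rfl | h
            · omega
            · exact h
          have := (hel₁ D hDQ b hbD).2
          omega
      · rcases Finset.mem_union.mp h₁u with h₁q | h₁r
        · rcases Finset.mem_union.mp h₂u with h₂q | h₂r
          · exact hnc₁ C₁ (Finset.mem_of_mem_erase h₁q) C₂ (Finset.mem_of_mem_erase h₂q)
              a ha b hb x hx d hd hab hbx hxd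
          · exfalso
            have h1 := (hel₂ _ h₂r b hb).2.1
            have h2 := (hel₁ _ (Finset.mem_of_mem_erase h₁q) x hx).2
            omega
        · rcases Finset.mem_union.mp h₂u with h₂q | h₂r
          · exfalso
            have h1 := (hel₂ _ h₁r x hx).2.1
            have h2 := (hel₁ _ (Finset.mem_of_mem_erase h₂q) d hd).2
            omega
          · exact hnc₂ C₁ h₁r C₂ h₂r a ha b hb x hx d hd hab hbx hxd
  have hmemQn : psiF M j Q R ∈ NCP s := by
    rw [mem_NCP]
    refine ⟨?_, ?_, hcovQn, hncQn⟩
    · rw [hQn]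
      intro C hC
      rcases Finset.mem_insert.mp hC with rfl | hCu
      · intro y hy
        rcases Finset.mem_insert.mp hy with rfl | h
        · exact hM
        · exact (hel₁ D hDQ y h).1
      · rcases Finset.mem_union.mp hCu with h | h
        · exact fun y hy => (hel₁ C (Finset.mem_of_mem_erase h) y hy).1
        · exact fun y hy => (hel₂ C h y hy).1
    · rw [hQn]
      intro C hC
      rcases Finset.mem_insert.mp hC with rfl | hCu
      · exact ⟨M, hME⟩
      · rcases Finset.mem_union.mp hCu with h | h
        · exact hne₁ C (Finset.mem_of_mem_erase h)
        · exact hne₂ C h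
  have hMnotQn : {M} ∉ psiF M j Q R := by
    rw [hQn]
    intro h
    rcases Finset.mem_insert.mp h with hEq | hCu
    · have : j ∈ ({M} : Finset ℕ) := by
        rw [hEq]
        exact Finset.mem_insert_of_mem hjD
      rw [Finset.mem_singleton] at this
      omega
    · exact hM_not_union _ hCu (Finset.mem_singleton_self M)
  have hblkQnM : blk (psiF M j Q R) M = E := by
    apply blk_eq (hcovQn M hM)
    · rw [hQn]; exact Finset.mem_insert_self _ _
    · exact hME
  have hjjQn : jjF M (psiF M j Q R) = j := by
    rw [jjF, hblkQnM, hE, Finset.erase_insert hMD]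
    apply le_antisymm
    · exact Finset.sup_le (fun y hy => (hel₁ D hDQ y hy).2)
    · exact Finset.le_sup (f := id) hjD
  have hfilter1 : (psiF M j Q R).filter (fun C => C ⊆ t1) = Q.erase D := by
    rw [hQn]
    ext C
    rw [Finset.mem_filter]
    constructor
    · rintro ⟨hC, hCt⟩
      rcases Finset.mem_insert.mp hC with rfl | hCu
      · exfalso
        have := (hmem_t1 M).mp (hCt hME)
        omega
      · rcases Finset.mem_union.mp hCu with h | h
        · exact h
        · exfalso
          obtain ⟨y, hy⟩ := hne₂ C h
          have h1 := (hmem_t1 y).mp (hCt hy)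
          have h2 := (hel₂ C h y hy).2.1
          omega
    · intro hC
      exact ⟨Finset.mem_insert_of_mem (Finset.mem_union_left _ hC),
        hsub₁ C (Finset.mem_of_mem_erase hC)⟩
  have hfilter2 : (psiF M j Q R).filter (fun C => C ⊆ t2) = R := by
    rw [hQn]
    ext C
    rw [Finset.mem_filter]
    constructor
    · rintro ⟨hC, hCt⟩
      rcases Finset.mem_insert.mp hC with rfl | hCu
      · exfalso
        have := (hmem_t2 M).mp (hCt hME)
        omega
      · rcases Finset.mem_union.mp hCu with h | h
        · exfalso
          obtain ⟨y, hy⟩ := hne₁ C (Finset.mem_of_mem_erase h)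
          have h1 := (hmem_t2 y).mp (hCt hy)
          have h2 := (hel₁ C (Finset.mem_of_mem_erase h) y hy).2
          omega
        · exact h
    · intro hC
      exact ⟨Finset.mem_insert_of_mem (Finset.mem_union_right _ hC), hsub₂ C hC⟩
  have hphi1 : phi1 s M (psiF M j Q R) = Q := by
    rw [phi1, hjjQn, hblkQnM, hE, Finset.erase_insert hMD, ← ht1, hfilter1,
      Finset.insert_erase hDQ]
  have hphi2 : phi2 s M (psiF M j Q R) = R := by
    rw [phi2, hjjQn, ← ht2, hfilter2]
  have hcard : (psiF M j Q R).card = Q.card + R.card := by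
    rw [hQn, Finset.card_insert_of_notMem hE_not_union, Finset.card_union_of_disjoint hdisjQR,
      Finset.card_erase_of_mem hDQ]
    have : 0 < Q.card := Finset.card_pos.mpr ⟨D, hDQ⟩
    omega
  exact ⟨hmemQn, hMnotQn, hjjQn, hphi1, hphi2, hcard⟩

lemma sumB (c : ℝ) (s : Finset ℕ) (M : ℕ) (hM : M ∈ s) (hmax : ∀ y ∈ s, y ≤ M) :
    ∑ P ∈ (NCP s).filter (fun P => ¬ ({M} ∈ P)), c ^ P.card
      = ∑ j ∈ s.erase M,
          (∑ Q ∈ NCP (s.filter (· ≤ j)), c ^ Q.card)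
            * (∑ R ∈ NCP (s.filter (fun x => j < x ∧ x < M)), c ^ R.card) := by
  classical
  have hrhs : (∑ j ∈ s.erase M,
        (∑ Q ∈ NCP (s.filter (· ≤ j)), c ^ Q.card)
          * (∑ R ∈ NCP (s.filter (fun x => j < x ∧ x < M)), c ^ R.card))
      = ∑ x ∈ (s.erase M).sigma (fun j =>
            (NCP (s.filter (· ≤ j))) ×ˢ (NCP (s.filter (fun y => j < y ∧ y < M)))),
          c ^ (x.2.1.card + x.2.2.card) := by
    rw [Finset.sum_sigma]
    apply Finset.sum_congr rfl
    intro j _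
    rw [Finset.sum_mul_sum, Finset.sum_product]
    apply Finset.sum_congr rfl
    intro Q _
    apply Finset.sum_congr rfl
    intro R _
    rw [pow_add]
  rw [hrhs]
  refine Finset.sum_nbij' (fun P => ⟨jjF M P, (phi1 s M P, phi2 s M P)⟩)
    (fun q => psiF M q.1 q.2.1 q.2.2) ?_ ?_ ?_ ?_ ?_
  · intro P hP
    rw [Finset.mem_filter] at hP
    obtain ⟨h1, h2, h3, -, -⟩ := forwardFacts hM hmax hP.1 hP.2
    simp only [Finset.mem_sigma, Finset.mem_product]
    exact ⟨h1, h2, h3⟩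
  · intro q hq
    obtain ⟨j, Q, R⟩ := q
    simp only [Finset.mem_sigma, Finset.mem_product] at hq
    obtain ⟨g1, g2, -, -, -, -⟩ := backwardFacts hM hmax hq.1 hq.2.1 hq.2.2
    rw [Finset.mem_filter]
    exact ⟨g1, g2⟩
  · intro P hP
    rw [Finset.mem_filter] at hP
    obtain ⟨-, -, -, -, h5⟩ := forwardFacts hM hmax hP.1 hP.2
    exact h5
  · intro q hq
    obtain ⟨j, Q, R⟩ := q
    simp only [Finset.mem_sigma, Finset.mem_product] at hq
    obtain ⟨-, -, g2, g3, g4, -⟩ := backwardFacts hM hmax hq.1 hq.2.1 hq.2.2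
    simp only [g2, g3, g4]
  · intro P hP
    rw [Finset.mem_filter] at hP
    obtain ⟨-, -, -, h4, -⟩ := forwardFacts hM hmax hP.1 hP.2
    simp only
    rw [h4]

theorem NCP_sum (c : ℝ) : ∀ (k : ℕ) (s : Finset ℕ), s.card = k →
    (∑ P ∈ NCP s, c ^ P.card) = pp c k := by
  intro k
  induction k using Nat.strong_induction_on with
  | _ k ih =>
    intro s hsk
    rcases Nat.eq_zero_or_pos k with rfl | hk
    · have hse : s = ∅ := Finset.card_eq_zero.mp hsk
      subst hse
      rw [NCP_empty, pp_zero]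
      simp
    · obtain ⟨k', rfl⟩ : ∃ k', k = k'+1 := ⟨k-1, by omega⟩
      have hsne : s.Nonempty := Finset.card_pos.mp (by omega)
      set M := s.max' hsne with hMdef
      have hM : M ∈ s := s.max'_mem hsne
      have hmax : ∀ y ∈ s, y ≤ M := fun y hy => Finset.le_max' s y hy
      rw [← Finset.sum_filter_add_sum_filter_not (NCP s) (fun P => {M} ∈ P) (fun P => c ^ P.card)]
      rw [sumA c s M hM, sumB c s M hM hmax]
      have hcard_erase : (s.erase M).card = k' := by
        rw [Finset.card_erase_of_mem hM, hsk]
        omega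
      rw [ih k' (by omega) _ hcard_erase]
      set ι : ℕ → ℕ := fun j => (s.filter (· ≤ j)).card with hι
      have hιprops : ∀ j ∈ s.erase M, 1 ≤ ι j ∧ ι j ≤ k'
          ∧ (s.filter (fun x => j < x ∧ x < M)).card = k' - ι j := by
        intro j hjmem
        have hjne : j ≠ M := (Finset.mem_erase.mp hjmem).1
        have hjs : j ∈ s := (Finset.mem_erase.mp hjmem).2
        have hjM : j < M := lt_of_le_of_ne (hmax j hjs) hjne
        have hsub1 : s.filter (· ≤ j) ⊆ s.erase M := by
          intro y hy
          rw [Finset.mem_filter] at hy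
          exact Finset.mem_erase.mpr ⟨by omega, hy.1⟩
        have hc1 : ι j ≤ k' := hcard_erase ▸ Finset.card_le_card hsub1
        have hc1' : 1 ≤ ι j := by
          apply Finset.card_pos.mpr
          exact ⟨j, Finset.mem_filter.mpr ⟨hjs, le_refl j⟩⟩
        have hsplit : (s.erase M) = (s.filter (· ≤ j)) ∪ (s.filter (fun x => j < x ∧ x < M)) := by
          ext y
          simp only [Finset.mem_erase, Finset.mem_filter, Finset.mem_union]
          constructor
          · rintro ⟨hyne, hys⟩
            have hyM : y < M := lt_of_le_of_ne (hmax y hys) hyne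
            by_cases h : y ≤ j
            · exact Or.inl ⟨hys, h⟩
            · exact Or.inr ⟨hys, by omega, hyM⟩
          · rintro (⟨hys, hyj⟩ | ⟨hys, h1, h2⟩)
            · exact ⟨by omega, hys⟩
            · exact ⟨by omega, hys⟩
        have hdisj : Disjoint (s.filter (· ≤ j)) (s.filter (fun x => j < x ∧ x < M)) := by
          rw [Finset.disjoint_left]
          intro y hy1 hy2
          rw [Finset.mem_filter] at hy1 hy2
          omega
        have := Finset.card_union_of_disjoint hdisj
        rw [← hsplit, hcard_erase] at this
        have hιj : ι j = (s.filter (· ≤ j)).card := rfl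
        exact ⟨hc1', hc1, by omega⟩
      have hjsum : (∑ j ∈ s.erase M,
            (∑ Q ∈ NCP (s.filter (· ≤ j)), c ^ Q.card)
              * (∑ R ∈ NCP (s.filter (fun x => j < x ∧ x < M)), c ^ R.card))
          = ∑ j ∈ s.erase M, pp c (ι j) * pp c (k' - ι j) := by
        apply Finset.sum_congr rfl
        intro j hjmem
        obtain ⟨hc1', hc1, hc2⟩ := hιprops j hjmem
        rw [ih (ι j) (by omega) (s.filter (· ≤ j)) rfl,
          ih (k' - ι j) (by omega) (s.filter (fun x => j < x ∧ x < M)) hc2]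
      rw [hjsum]
      have hinj : Set.InjOn ι (s.erase M) := by
        intro a ha b hb heq
        by_contra hne
        have hgen : ∀ u v : ℕ, u ∈ s.erase M → v ∈ s.erase M → u < v → ι u < ι v := by
          intro u v hu hv huv
          apply Finset.card_lt_card
          constructor
          · intro y hy
            rw [Finset.mem_filter] at hy ⊢
            exact ⟨hy.1, by omega⟩
          · intro hcon
            have hvs : v ∈ s := (Finset.mem_erase.mp hv).2
            have : v ∈ s.filter (· ≤ u) := hcon (Finset.mem_filter.mpr ⟨hvs, le_refl v⟩)
            rw [Finset.mem_filter] at this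
            omega
        rcases lt_trichotomy a b with h | h | h
        · exact absurd heq (by have := hgen a b ha hb h; omega)
        · exact hne h
        · exact absurd heq (by have := hgen b a hb ha h; omega)
      have himg : (s.erase M).image ι = Finset.Icc 1 k' := by
        apply Finset.eq_of_subset_of_card_le
        · intro i hi
          obtain ⟨j, hjmem, rfl⟩ := Finset.mem_image.mp hi
          obtain ⟨h1, h2, -⟩ := hιprops j hjmem
          exact Finset.mem_Icc.mpr ⟨h1, h2⟩
        · rw [Finset.card_image_of_injOn hinj, hcard_erase, Nat.card_Icc]
          omega
      have hsum_img : ∑ j ∈ s.erase M, pp c (ι j) * pp c (k' - ι j)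
          = ∑ i ∈ Finset.Icc 1 k', pp c i * pp c (k' - i) := by
        rw [← himg]
        rw [Finset.sum_image (fun a ha b hb h => hinj ha hb h)]
      rw [hsum_img]
      have hIcc : ∑ i ∈ Finset.Icc 1 k', pp c i * pp c (k' - i)
          = ∑ i ∈ range k', pp c (i+1) * pp c (k'-1-i) := by
        rw [show Finset.Icc 1 k' = Finset.Ico 1 (k'+1) from by
          rw [Finset.Ico_add_one_right_eq_Icc], Finset.sum_Ico_eq_sum_range]
        apply Finset.sum_congr (by congr 1)
        intro i _
        congr 1
        · congr 1
          omega
        · congr 1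
          omega
      rw [hIcc, pp_succ]

lemma mem_NC {n : ℕ} {P : Finset (Finset (Fin n))} :
    P ∈ NC n ↔ IsPartition P ∧ IsNonCrossing P := by
  classical
  simp [NC]

lemma NC_to_NCP (c : ℝ) (n : ℕ) :
    (∑ P ∈ NC n, c ^ P.card) = ∑ P ∈ NCP (Finset.range n), c ^ P.card := by
  classical
  set f : Finset (Fin n) → Finset ℕ := fun B => B.image (fun x : Fin n => (x : ℕ)) with hf
  set g : Finset ℕ → Finset (Fin n) :=
    fun B => (B.filter (· < n)).attachFin (fun m hm => (Finset.mem_filter.mp hm).2) with hgdef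
  have hmemf : ∀ (B : Finset (Fin n)) (y : ℕ), y ∈ f B ↔ ∃ a ∈ B, (a : ℕ) = y := by
    intro B y
    simp [hf]
  have hmemg : ∀ (B : Finset ℕ) (a : Fin n), a ∈ g B ↔ (a : ℕ) ∈ B := by
    intro B a
    rw [hgdef]
    simp only [Finset.mem_attachFin, Finset.mem_filter]
    exact ⟨fun h => h.1, fun h => ⟨h, a.isLt⟩⟩
  have hfinj : Function.Injective f := by
    intro B₁ B₂ h
    ext a
    constructor
    · intro ha
      have : (a : ℕ) ∈ f B₂ := by
        rw [← h]
        exact (hmemf B₁ a).mpr ⟨a, ha, rfl⟩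
      obtain ⟨b, hb, hba⟩ := (hmemf B₂ (a : ℕ)).mp this
      rwa [← Fin.val_injective hba]
    · intro ha
      have : (a : ℕ) ∈ f B₁ := by
        rw [h]
        exact (hmemf B₂ a).mpr ⟨a, ha, rfl⟩
      obtain ⟨b, hb, hba⟩ := (hmemf B₁ (a : ℕ)).mp this
      rwa [← Fin.val_injective hba]
  have hgf : ∀ B : Finset (Fin n), g (f B) = B := by
    intro B
    ext a
    rw [hmemg]
    constructor
    · intro h
      obtain ⟨b, hb, hba⟩ := (hmemf B (a : ℕ)).mp h
      rwa [← Fin.val_injective hba]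
    · intro h
      exact (hmemf B a).mpr ⟨a, h, rfl⟩
  have hfg : ∀ B : Finset ℕ, B ⊆ Finset.range n → f (g B) = B := by
    intro B hB
    ext y
    rw [hmemf]
    constructor
    · rintro ⟨a, ha, rfl⟩
      exact (hmemg B a).mp ha
    · intro hy
      have hyn : y < n := Finset.mem_range.mp (hB hy)
      exact ⟨⟨y, hyn⟩, (hmemg B ⟨y, hyn⟩).mpr hy, rfl⟩
  refine Finset.sum_nbij' (fun P => P.image f) (fun Q => Q.image g) ?_ ?_ ?_ ?_ ?_
  · intro P hP
    obtain ⟨⟨hne, hcov⟩, hnc⟩ := mem_NC.mp hP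
    rw [mem_NCP]
    refine ⟨?_, ?_, ?_, ?_⟩
    · intro C hC
      obtain ⟨B, hB, rfl⟩ := Finset.mem_image.mp hC
      intro y hy
      obtain ⟨a, -, rfl⟩ := (hmemf B y).mp hy
      exact Finset.mem_range.mpr a.isLt
    · intro C hC
      obtain ⟨B, hB, rfl⟩ := Finset.mem_image.mp hC
      obtain ⟨a, ha⟩ := hne B hB
      exact ⟨(a : ℕ), (hmemf B (a:ℕ)).mpr ⟨a, ha, rfl⟩⟩
    · intro y hy
      have hyn : y < n := Finset.mem_range.mp hy
      obtain ⟨B, ⟨hB, haB⟩, huniq⟩ := hcov ⟨y, hyn⟩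
      refine ⟨f B, ⟨Finset.mem_image_of_mem f hB, (hmemf B y).mpr ⟨⟨y, hyn⟩, haB, rfl⟩⟩, ?_⟩
      rintro C ⟨hC, hyC⟩
      obtain ⟨B', hB', rfl⟩ := Finset.mem_image.mp hC
      obtain ⟨a, haB', hay⟩ := (hmemf B' y).mp hyC
      have ha : a = ⟨y, hyn⟩ := Fin.val_injective (by simp [hay])
      rw [huniq B' ⟨hB', ha ▸ haB'⟩]
    · intro C₁ h₁ C₂ h₂ a ha b hb x hx d hd hab hbx hxd
      obtain ⟨B₁, hB₁, rfl⟩ := Finset.mem_image.mp h₁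
      obtain ⟨B₂, hB₂, rfl⟩ := Finset.mem_image.mp h₂
      obtain ⟨α, hα, rfl⟩ := (hmemf B₁ a).mp ha
      obtain ⟨β, hβ, rfl⟩ := (hmemf B₂ b).mp hb
      obtain ⟨ξ, hξ, rfl⟩ := (hmemf B₁ x).mp hx
      obtain ⟨δ, hδ, rfl⟩ := (hmemf B₂ d).mp hd
      have := hnc B₁ hB₁ B₂ hB₂ α hα β hβ ξ hξ δ hδ
        (by exact_mod_cast hab) (by exact_mod_cast hbx) (by exact_mod_cast hxd)
      rw [this]
  · intro Q hQ
    obtain ⟨hsub, hne, hcov, hnc⟩ := mem_NCP.mp hQ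
    rw [mem_NC]
    refine ⟨⟨?_, ?_⟩, ?_⟩
    · intro B hB
      obtain ⟨C, hC, rfl⟩ := Finset.mem_image.mp hB
      obtain ⟨y, hy⟩ := hne C hC
      have hyn : y < n := Finset.mem_range.mp (hsub C hC hy)
      exact ⟨⟨y, hyn⟩, (hmemg C ⟨y, hyn⟩).mpr hy⟩
    · intro a
      obtain ⟨C, ⟨hC, haC⟩, huniq⟩ := hcov (a : ℕ) (Finset.mem_range.mpr a.isLt)
      refine ⟨g C, ⟨Finset.mem_image_of_mem g hC, (hmemg C a).mpr haC⟩, ?_⟩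
      rintro D ⟨hD, haD⟩
      obtain ⟨C', hC', rfl⟩ := Finset.mem_image.mp hD
      rw [huniq C' ⟨hC', (hmemg C' a).mp haD⟩]
    · intro D₁ h₁ D₂ h₂ α hα β hβ ξ hξ δ hδ hab hbx hxd
      obtain ⟨C₁, hC₁, rfl⟩ := Finset.mem_image.mp h₁
      obtain ⟨C₂, hC₂, rfl⟩ := Finset.mem_image.mp h₂
      have := hnc C₁ hC₁ C₂ hC₂ (α:ℕ) ((hmemg C₁ α).mp hα) (β:ℕ) ((hmemg C₂ β).mp hβ)
        (ξ:ℕ) ((hmemg C₁ ξ).mp hξ) (δ:ℕ) ((hmemg C₂ δ).mp hδ)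
        (by exact_mod_cast hab) (by exact_mod_cast hbx) (by exact_mod_cast hxd)
      rw [this]
  · intro P hP
    show (P.image f).image g = P
    rw [Finset.image_image]
    have heq : ∀ B ∈ P, (g ∘ f) B = B := fun B _ => hgf B
    rw [Finset.image_congr (fun B hB => heq B hB)]
    simp
  · intro Q hQ
    obtain ⟨hsub, -, -, -⟩ := mem_NCP.mp hQ
    show (Q.image g).image f = Q
    rw [Finset.image_image]
    have heq : ∀ C ∈ Q, (f ∘ g) C = C := by
      intro C hC
      exact hfg C (hsub C hC)
    rw [Finset.image_congr (fun C hC => heq C hC)]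
    simp
  · intro P hP
    congr 1
    exact (Finset.card_image_of_injective P hfinj).symm

end MPaux

/-- The n-th moment of the Marchenko–Pastur distribution with parameter `c > 0`
equals `∑_{π ∈ NC(n)} c^{#(π)}`. -/
theorem stmt_12 (c : ℝ) (hc : 0 < c) (n : ℕ) (hn : 1 ≤ n) :
    (∫ x in ((1 - Real.sqrt c) ^ 2)..((1 + Real.sqrt c) ^ 2),
        x ^ n * Real.sqrt (((1 + Real.sqrt c) ^ 2 - x) * (x - (1 - Real.sqrt c) ^ 2))
          / (2 * Real.pi * x))
      = ∑ P ∈ NC n, c ^ P.card := by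
  obtain ⟨n', rfl⟩ : ∃ n', n = n'+1 := ⟨n-1, by omega⟩
  rw [MPaux.moment_eq c hc n', MPaux.A_eq_pp c hc (n'+1) (by omega),
    ← MPaux.NCP_sum c (n'+1) (Finset.range (n'+1)) (by simp),
    MPaux.NC_to_NCP c (n'+1)]
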